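/- Let R be an algebraic curvature tensor on V = Σ ⊕ Σ^⊥ such that R(z,u)z = 0 for all z ∈ Σ, u ∈ Σ^⊥ (mixed planes are flat in the strong sense). Then for all u, v ∈ Σ^⊥ and x ∈ Σ one has R(u,v)x = 2R(u,x)v. -/

import Mathlib

open scoped RealInnerProductSpace

/-- If `c1 * t + c2 * t^2 ≥ 0` for all `t`, then `c1 = 0`. -/
lemma stmt6_quad_aux (c1 c2 : ℝ) (h : ∀ t : ℝ, 0 ≤ c1 * t + c2 * t ^ 2) : c1 = 0 := by
  by_contra hc
  have hp : (0:ℝ) < 1 + c2 ^ 2 := by positivity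
  have h1 := h (-c1 / (1 + c2 ^ 2))
  have hc1 : 0 < c1 ^ 2 := by positivity
  have hne : (1 + c2 ^ 2) ≠ 0 := ne_of_gt hp
  field_simp at h1
  have hq : (0:ℝ) < 1 + c2 ^ 2 - c2 := by nlinarith [sq_nonneg (2 * c2 - 1)]
  nlinarith [mul_pos (mul_pos hc1 hp) hq]

/-- For an algebraic curvature tensor on V = Σ ⊕ Σᗮ with R z u z = 0 for z ∈ Σ, u ∈ Σᗮ,
one has R(u,v)x = 2 R(u,x)v for u, v ∈ Σᗮ and x ∈ Σ. -/
theorem stmt6 {V : Type*} [NormedAddCommGroup V] [InnerProductSpace ℝ V] [FiniteDimensional ℝ V] (Sig : Submodule ℝ V)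
    (R : V →ₗ[ℝ] V →ₗ[ℝ] V →ₗ[ℝ] V)
    (hanti1 : ∀ x y, R x y = - R y x)
    (hanti2 : ∀ x y z w, ⟪R x y z, w⟫ = - ⟪R x y w, z⟫)
    (hpair : ∀ x y z w, ⟪R x y z, w⟫ = ⟪R z w x, y⟫)
    (hbianchi : ∀ x y z, R x y z + R y z x + R z x y = 0)
    (hnonneg : ∀ x y, 0 ≤ ⟪R x y y, x⟫)
    (hflat : ∀ z ∈ Sig, ∀ u ∈ Sigᗮ, R z u z = 0)
    (u : V) (hu : u ∈ Sigᗮ) (v : V) (hv : v ∈ Sigᗮ) (x : V) (hx : x ∈ Sig) :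
    R u v x = (2 : ℝ) • R u x v := by
  -- Step 1 : R z w w = 0 for z ∈ Σ, w ∈ Σᗮ
  have key : ∀ z ∈ Sig, ∀ w ∈ Sigᗮ, R z w w = 0 := by
    intro z hz w hw
    have hz0 : R z w z = 0 := hflat z hz w hw
    have hall : ∀ y : V, ⟪R z w w, y⟫ = 0 := by
      intro y
      have hq : ∀ t : ℝ, 0 ≤ (2 * ⟪R z w w, y⟫) * t + ⟪R y w w, y⟫ * t ^ 2 := by
        intro t
        have h0 := hnonneg (z + t • y) w
        have hz1 : ⟪R z w w, z⟫ = 0 := by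
          rw [hanti2, hz0]
          simp
        have hsym : ⟪R y w w, z⟫ = ⟪R z w w, y⟫ := by
          rw [hpair y w w z, hanti2 w z y w, hpair w z w y, hanti2 w y w z,
            ← hpair z w w y]
          ring
        simp only [map_add, map_smul, LinearMap.add_apply, LinearMap.smul_apply,
          inner_add_left, inner_add_right, real_inner_smul_left, real_inner_smul_right] at h0
        rw [hz1, hsym] at h0
        ring_nf at h0 ⊢
        linarith
      have := stmt6_quad_aux _ _ hq
      linarith
    have := hall (R z w w)
    exact inner_self_eq_zero.mp this
  -- Step 2 : polarization, R x u v + R x v u = 0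
  have h4 : R x v u = - R x u v := by
    have hmix := key x hx (u + v) (Submodule.add_mem _ hu hv)
    simp only [map_add, LinearMap.add_apply] at hmix
    rw [key x hx u hu, key x hx v hv] at hmix
    have : R x u v + R x v u = 0 := by
      have := hmix
      abel_nf at this ⊢
      linear_combination (norm := abel) this
    exact eq_neg_of_add_eq_zero_right this
  -- Step 3 : assemble via Bianchi
  have hb := hbianchi u v x
  have e1 : R u x v = - R x u v := by rw [hanti1 u x]; simp
  have e2 : R v x u = - R x v u := by rw [hanti1 v x]; simp
  rw [e2, h4, neg_neg] at hb
  rw [e1, smul_neg, two_smul]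
  rw [add_assoc] at hb
  exact eq_neg_of_add_eq_zero_left hb
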